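/- Let G be a bipartite graph without isolated vertices. Then the Grundy total domination number of G is an even number. -/

import Mathlib

/-- `S` is a total dominating set of `G`: every vertex has a neighbor in `S`. -/
def IsTotalDomSet {V : Type*} (G : SimpleGraph V) (S : Set V) : Prop :=
  ∀ v : V, ∃ u ∈ S, G.Adj v u

/-- `l` is a legal sequence of `G`: the vertices are distinct and every vertex
(except possibly the first) totally dominates a vertex not totally dominated
by the previous vertices. -/
def IsLegalSeq {V : Type*} (G : SimpleGraph V) (l : List V) : Prop :=
  l.Nodup ∧ ∀ i : Fin l.length, 0 < (i : ℕ) →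
    ∃ w : V, G.Adj (l.get i) w ∧ ∀ j : Fin l.length, (j : ℕ) < (i : ℕ) → ¬ G.Adj (l.get j) w

/-- `l` is a total dominating sequence of `G`. -/
def IsTotalDomSeq {V : Type*} (G : SimpleGraph V) (l : List V) : Prop :=
  IsLegalSeq G l ∧ IsTotalDomSet G {v | v ∈ l}

/-- The Grundy total domination number of `G`: the maximum length of a total
dominating sequence. -/
noncomputable def grundyTotalDomNum {V : Type*} (G : SimpleGraph V) : ℕ :=
  sSup {k : ℕ | ∃ l : List V, IsTotalDomSeq G l ∧ l.length = k}

/-- The total domination number of `G`: the minimum cardinality of a total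
dominating set. -/
noncomputable def totalDomNum {V : Type*} (G : SimpleGraph V) : ℕ :=
  sInf {k : ℕ | ∃ S : Set V, IsTotalDomSet G S ∧ S.ncard = k}

/-- `A`, `B` is a bipartition of `G`. -/
def IsBipartitionOf {V : Type*} (G : SimpleGraph V) (A B : Set V) : Prop :=
  (∀ v : V, (v ∈ A ∧ v ∉ B) ∨ (v ∈ B ∧ v ∉ A)) ∧
  ∀ ⦃u v : V⦄, G.Adj u v → (u ∈ A ∧ v ∈ B) ∨ (u ∈ B ∧ v ∈ A)

/-- `G` has no false twins: distinct vertices have distinct open neighborhoods. -/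
def FalseTwinFree {V : Type*} (G : SimpleGraph V) : Prop :=
  ∀ u v : V, u ≠ v → G.neighborSet u ≠ G.neighborSet v

/-- `G` has no isolated vertices. -/
def NoIsolatedVerts {V : Type*} (G : SimpleGraph V) : Prop :=
  ∀ v : V, ∃ u : V, G.Adj v u

namespace GrundyAux

variable {V : Type*}

lemma bip_symm {G : SimpleGraph V} {A B : Set V} (h : IsBipartitionOf G A B) :
    IsBipartitionOf G B A :=
  ⟨fun v => (h.1 v).symm, fun _ _ huv => (h.2 huv).symm⟩

lemma mem_B_of_adj {G : SimpleGraph V} {A B : Set V} (h : IsBipartitionOf G A B)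
    {u v : V} (hu : u ∈ A) (huv : G.Adj u v) : v ∈ B := by
  rcases h.2 huv with ⟨_, hv⟩ | ⟨hu', _⟩
  · exact hv
  · rcases h.1 u with ⟨_, h2⟩ | ⟨_, h2⟩
    · exact absurd hu' h2
    · exact absurd hu h2

lemma not_adj_same {G : SimpleGraph V} {A B : Set V} (h : IsBipartitionOf G A B)
    {u v : V} (hu : u ∈ A) (hv : v ∈ A) : ¬ G.Adj u v := by
  intro hadj
  have hvB : v ∈ B := mem_B_of_adj h hu hadj
  rcases h.1 v with ⟨_, h2⟩ | ⟨_, h2⟩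
  · exact h2 hvB
  · exact h2 hv

lemma legal_sublist {G : SimpleGraph V} {l m : List V}
    (hl : IsLegalSeq G l) (hm : List.Sublist m l) : IsLegalSeq G m := by
  obtain ⟨f, hf⟩ := List.sublist_iff_exists_fin_orderEmbedding_get_eq.mp hm
  refine ⟨hm.nodup hl.1, fun i hi => ?_⟩
  have hfi : 0 < ((f i : Fin l.length) : ℕ) := by
    have h0 : (⟨0, i.pos⟩ : Fin m.length) < i := by
      simpa [Fin.lt_def] using hi
    have := f.strictMono h0
    have := Fin.lt_def.mp this
    omega
  obtain ⟨w, hw1, hw2⟩ := hl.2 (f i) hfi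
  refine ⟨w, by rw [hf i]; exact hw1, fun j hj => ?_⟩
  rw [hf j]
  exact hw2 (f j) (Fin.lt_def.mp (f.strictMono (Fin.lt_def.mpr hj)))

lemma legal_append_singleton {G : SimpleGraph V} {l : List V} {a b : V}
    (hl : IsLegalSeq G l) (ha : a ∉ l) (hab : G.Adj a b)
    (hb : ∀ v ∈ l, ¬ G.Adj v b) : IsLegalSeq G (l ++ [a]) := by
  constructor
  · simp [List.nodup_append, hl.1, ha]; exact fun x hx h => ha (h ▸ hx)
  · intro i hi
    by_cases hcase : (i : ℕ) < l.length
    · obtain ⟨w, hw1, hw2⟩ := hl.2 ⟨i, hcase⟩ hi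
      refine ⟨w, ?_, fun j hj => ?_⟩
      · simpa [List.get_eq_getElem, List.getElem_append_left hcase] using hw1
      · have hj' : (j : ℕ) < l.length := lt_trans hj hcase
        have := hw2 ⟨j, hj'⟩ hj
        simpa [List.get_eq_getElem, List.getElem_append_left hj'] using this
    · have hieq : (i : ℕ) = l.length := by
        have := i.2; simp at this; omega
      refine ⟨b, ?_, fun j hj => ?_⟩
      · have : (l ++ [a]).get i = a := by
          simp [List.get_eq_getElem]
          exact List.getElem_concat_length hieq _
        rw [this]; exact hab
      · have hj' : (j : ℕ) < l.length := by omega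
        have : (l ++ [a]).get j = l.get ⟨j, hj'⟩ := by
          simp [List.get_eq_getElem, List.getElem_append_left hj']
        rw [this]
        exact hb _ (l.get_mem _)

lemma extend_side [Fintype V] {G : SimpleGraph V} {A B : Set V}
    (hbip : IsBipartitionOf G A B) (hiso : NoIsolatedVerts G) :
    ∀ (n : ℕ) (l : List V), IsLegalSeq G l → (∀ v ∈ l, v ∈ A) →
      Fintype.card V - l.length ≤ n →
      ∃ l', IsLegalSeq G l' ∧ (∀ v ∈ l', v ∈ A) ∧ (∀ b ∈ B, ∃ a ∈ l', G.Adj b a) ∧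
        l.length ≤ l'.length := by
  intro n
  induction n with
  | zero =>
    intro l hl hA hn
    by_cases hdom : ∀ b ∈ B, ∃ a ∈ l, G.Adj b a
    · exact ⟨l, hl, hA, hdom, le_rfl⟩
    · exfalso
      push_neg at hdom
      obtain ⟨b, hbB, hb⟩ := hdom
      obtain ⟨a, hba⟩ := hiso b
      have haL : a ∉ l := fun h => hb a h hba
      have hnodup : (l ++ [a]).Nodup := by simp [List.nodup_append, hl.1, haL]; exact fun x hx h => haL (h ▸ hx)
      have := hnodup.length_le_card
      simp at this
      omega
  | succ n ih =>
    intro l hl hA hn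
    by_cases hdom : ∀ b ∈ B, ∃ a ∈ l, G.Adj b a
    · exact ⟨l, hl, hA, hdom, le_rfl⟩
    · push_neg at hdom
      obtain ⟨b, hbB, hb⟩ := hdom
      obtain ⟨a, hba⟩ := hiso b
      have haA : a ∈ A := mem_B_of_adj (bip_symm hbip) hbB hba
      have haL : a ∉ l := fun h => hb a h hba
      have hleg : IsLegalSeq G (l ++ [a]) :=
        legal_append_singleton hl haL hba.symm (fun v hv hvb => hb v hv hvb.symm)
      have hA' : ∀ v ∈ l ++ [a], v ∈ A := by
        intro v hv
        rcases List.mem_append.mp hv with h | h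
        · exact hA v h
        · simp at h; subst h; exact haA
      obtain ⟨l', h1, h2, h3, h4⟩ := ih (l ++ [a]) hleg hA' (by simp; omega)
      refine ⟨l', h1, h2, h3, ?_⟩
      simp at h4; omega

lemma transpose_side {G : SimpleGraph V} {A B : Set V}
    (hbip : IsBipartitionOf G A B) (hiso : NoIsolatedVerts G)
    {l : List V} (hl : IsLegalSeq G l) (hA : ∀ v ∈ l, v ∈ A) :
    ∃ m, IsLegalSeq G m ∧ (∀ v ∈ m, v ∈ B) ∧ m.length = l.length := by
  classical
  have hw : ∀ i : Fin l.length, ∃ w, G.Adj (l.get i) w ∧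
      ∀ j : Fin l.length, (j : ℕ) < (i : ℕ) → ¬ G.Adj (l.get j) w := by
    intro i
    rcases Nat.eq_zero_or_pos (i : ℕ) with h0 | h0
    · obtain ⟨w, hw⟩ := hiso (l.get i)
      exact ⟨w, hw, fun j hj => absurd hj (by omega)⟩
    · exact hl.2 i h0
  choose w hw1 hw2 using hw
  have hwinj : Function.Injective w := by
    intro i j hij
    by_contra hne
    rcases Ne.lt_or_gt hne with h | h
    · exact hw2 j i (Fin.lt_def.mp h) (hij ▸ hw1 i)
    · exact hw2 i j (Fin.lt_def.mp h) (hij ▸ hw1 j)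
  refine ⟨List.ofFn (fun t => w t.rev), ⟨?_, ?_⟩, ?_, by simp⟩
  · exact List.nodup_ofFn.mpr (hwinj.comp Fin.rev_injective)
  · intro i hi
    have hlen : (List.ofFn (fun t => w t.rev)).length = l.length := by simp
    set i' : Fin l.length := Fin.cast hlen i with hi'
    have hget : ∀ t : Fin (List.ofFn (fun t => w t.rev)).length,
        (List.ofFn (fun t => w t.rev)).get t = w (Fin.cast hlen t).rev := by
      intro t
      rw [List.get_ofFn]
    refine ⟨l.get i'.rev, ?_, fun j hj => ?_⟩
    · rw [hget i]
      exact (hw1 i'.rev).symm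
    · set j' : Fin l.length := Fin.cast hlen j with hj'
      have hrev : i'.rev < j'.rev := Fin.rev_lt_rev.mpr (Fin.lt_def.mpr hj)
      have := hw2 j'.rev i'.rev (Fin.lt_def.mp hrev)
      rw [hget j]
      exact fun h => this h.symm
  · intro v hv
    rw [List.mem_ofFn] at hv
    obtain ⟨t, ht⟩ := hv
    exact ht ▸ mem_B_of_adj hbip (hA _ (l.get_mem _)) (hw1 t.rev)

lemma concat_total {G : SimpleGraph V} {A B : Set V}
    (hbip : IsBipartitionOf G A B) (hiso : NoIsolatedVerts G) {lA lB : List V}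
    (hA1 : IsLegalSeq G lA) (hA2 : ∀ v ∈ lA, v ∈ A) (hA3 : ∀ b ∈ B, ∃ a ∈ lA, G.Adj b a)
    (hB1 : IsLegalSeq G lB) (hB2 : ∀ v ∈ lB, v ∈ B) (hB3 : ∀ b ∈ A, ∃ a ∈ lB, G.Adj b a) :
    IsTotalDomSeq G (lA ++ lB) := by
  have hdisj : lA.Disjoint lB := by
    intro v hvA hvB
    rcases hbip.1 v with ⟨_, h2⟩ | ⟨_, h2⟩
    · exact h2 (hB2 v hvB)
    · exact h2 (hA2 v hvA)
  refine ⟨⟨List.nodup_append.mpr ⟨hA1.1, hB1.1, fun x hx y hy hxy => hdisj hx (hxy ▸ hy)⟩, ?_⟩, ?_⟩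
  · intro i hi
    by_cases hcase : (i : ℕ) < lA.length
    · obtain ⟨ww, hw1, hw2⟩ := hA1.2 ⟨i, hcase⟩ hi
      refine ⟨ww, ?_, fun j hj => ?_⟩
      · simpa [List.get_eq_getElem, List.getElem_append_left hcase] using hw1
      · have hj' : (j : ℕ) < lA.length := lt_trans hj hcase
        have := hw2 ⟨j, hj'⟩ hj
        simpa [List.get_eq_getElem, List.getElem_append_left hj'] using this
    · push_neg at hcase
      have hi2 : (i : ℕ) - lA.length < lB.length := by
        have := i.2; simp at this; omega
      have hgeti : (lA ++ lB).get i = lB.get ⟨(i : ℕ) - lA.length, hi2⟩ := by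
        simp [List.get_eq_getElem, List.getElem_append_right hcase]
      have hmain : ∃ ww, G.Adj ((lA ++ lB).get i) ww ∧
          ∀ j2 : Fin lB.length, (j2 : ℕ) < (i : ℕ) - lA.length → ¬ G.Adj (lB.get j2) ww := by
        rcases Nat.eq_zero_or_pos ((i : ℕ) - lA.length) with h0 | h0
        · obtain ⟨ww, hww⟩ := hiso ((lA ++ lB).get i)
          exact ⟨ww, hww, fun j2 hj2 => absurd hj2 (by omega)⟩
        · obtain ⟨ww, hw1, hw2⟩ := hB1.2 ⟨(i : ℕ) - lA.length, hi2⟩ h0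
          exact ⟨ww, hgeti ▸ hw1, hw2⟩
      obtain ⟨ww, hw1, hw2⟩ := hmain
      have hwwA : ww ∈ A := by
        have hiB : (lA ++ lB).get i ∈ B := by
          rw [hgeti]; exact hB2 _ (lB.get_mem _)
        exact mem_B_of_adj (bip_symm hbip) hiB hw1
      refine ⟨ww, hw1, fun j hj => ?_⟩
      by_cases hjc : (j : ℕ) < lA.length
      · have hgetj : (lA ++ lB).get j = lA.get ⟨j, hjc⟩ := by
          simp [List.get_eq_getElem, List.getElem_append_left hjc]
        rw [hgetj]
        exact not_adj_same hbip (hA2 _ (lA.get_mem _)) hwwA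
      · push_neg at hjc
        have hj2 : (j : ℕ) - lA.length < lB.length := by
          have := j.2; simp at this; omega
        have hgetj : (lA ++ lB).get j = lB.get ⟨(j : ℕ) - lA.length, hj2⟩ := by
          simp [List.get_eq_getElem, List.getElem_append_right hjc]
        rw [hgetj]
        exact hw2 ⟨(j : ℕ) - lA.length, hj2⟩ (show (j : ℕ) - lA.length < (i : ℕ) - lA.length by omega)
  · intro v
    rcases hbip.1 v with ⟨h1, _⟩ | ⟨h1, _⟩
    · obtain ⟨a, ha, hadj⟩ := hB3 v h1
      exact ⟨a, by simp [Set.mem_setOf_eq, List.mem_append, ha], hadj⟩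
    · obtain ⟨a, ha, hadj⟩ := hA3 v h1
      exact ⟨a, by simp [Set.mem_setOf_eq, List.mem_append, ha], hadj⟩

end GrundyAux

/-- The Grundy total domination number of a bipartite graph
without isolated vertices is even. -/
theorem grundy_total_dom_even_of_bipartite {V : Type*} [Fintype V] (G : SimpleGraph V)
    (hbip : ∃ A B : Set V, IsBipartitionOf G A B)
    (hiso : NoIsolatedVerts G) :
    Even (grundyTotalDomNum G) := by
  classical
  open GrundyAux in
  obtain ⟨A, B, hbip⟩ := hbip
  set S : Set ℕ := {k : ℕ | ∃ l : List V, IsTotalDomSeq G l ∧ l.length = k} with hS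
  have hgr : grundyTotalDomNum G = sSup S := rfl
  have hbdd : BddAbove S := by
    refine ⟨Fintype.card V, ?_⟩
    rintro k ⟨l, hl, rfl⟩
    exact hl.1.1.length_le_card
  have hempty : IsLegalSeq G ([] : List V) := ⟨List.nodup_nil, fun i => i.elim0⟩
  obtain ⟨lA0, hA1, hA2, hA3, -⟩ := extend_side hbip hiso (Fintype.card V) [] hempty
    (by simp) (by simp)
  obtain ⟨lB0, hB1, hB2, hB3, -⟩ := extend_side (bip_symm hbip) hiso (Fintype.card V) [] hempty
    (by simp) (by simp)
  have hne : S.Nonempty :=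
    ⟨(lA0 ++ lB0).length, lA0 ++ lB0, concat_total hbip hiso hA1 hA2 hA3 hB1 hB2 hB3, rfl⟩
  have hmem : grundyTotalDomNum G ∈ S := by
    rw [hgr]; exact Nat.sSup_mem hne hbdd
  obtain ⟨l, hl, hlen⟩ := hmem
  -- the key bound: any legal sequence inside one side dominating the other side
  -- gives a total dominating sequence of at least twice its length
  have key : ∀ (A B : Set V), IsBipartitionOf G A B → ∀ (lB : List V), IsLegalSeq G lB →
      (∀ v ∈ lB, v ∈ B) → (∀ b ∈ A, ∃ a ∈ lB, G.Adj b a) →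
      2 * lB.length ≤ grundyTotalDomNum G := by
    intro A B hbip lB h1 h2 h3
    obtain ⟨m, hm1, hm2, hm3⟩ := transpose_side (bip_symm hbip) hiso h1 h2
    obtain ⟨m', hm'1, hm'2, hm'3, hm'len⟩ := extend_side hbip hiso (Fintype.card V) m hm1 hm2
      (Nat.sub_le _ _)
    have htot : IsTotalDomSeq G (m' ++ lB) := concat_total hbip hiso hm'1 hm'2 hm'3 h1 h2 h3
    have hmemS : (m' ++ lB).length ∈ S := ⟨m' ++ lB, htot, rfl⟩
    have hle := le_csSup hbdd hmemS
    rw [← hgr] at hle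
    simp only [List.length_append] at hle
    omega
  -- split the maximum sequence into its two sides
  set lA := l.filter (fun v => decide (v ∈ A)) with hlAdef
  set lB := l.filter (fun v => decide (v ∈ B)) with hlBdef
  have hsubA : List.Sublist lA l := List.filter_sublist
  have hsubB : List.Sublist lB l := List.filter_sublist
  have hlegA : IsLegalSeq G lA := GrundyAux.legal_sublist hl.1 hsubA
  have hlegB : IsLegalSeq G lB := GrundyAux.legal_sublist hl.1 hsubB
  have hmemA : ∀ v ∈ lA, v ∈ A := by
    intro v hv
    have := (List.mem_filter.mp hv).2
    simpa using this
  have hmemB : ∀ v ∈ lB, v ∈ B := by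
    intro v hv
    have := (List.mem_filter.mp hv).2
    simpa using this
  have hdomA : ∀ b ∈ B, ∃ a ∈ lA, G.Adj b a := by
    intro b hbB
    obtain ⟨u, hu, hadj⟩ := hl.2 b
    have huA : u ∈ A := mem_B_of_adj (bip_symm hbip) hbB hadj
    exact ⟨u, List.mem_filter.mpr ⟨hu, by simpa using huA⟩, hadj⟩
  have hdomB : ∀ b ∈ A, ∃ a ∈ lB, G.Adj b a := by
    intro b hbA
    obtain ⟨u, hu, hadj⟩ := hl.2 b
    have huB : u ∈ B := mem_B_of_adj hbip hbA hadj
    exact ⟨u, List.mem_filter.mpr ⟨hu, by simpa using huB⟩, hadj⟩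
  have hsum : l.length = lA.length + lB.length := by
    rw [List.length_eq_length_filter_add (fun v => decide (v ∈ A))]
    congr 1
    rw [hlBdef]
    apply congrArg List.length
    apply List.filter_congr
    intro v _
    rcases hbip.1 v with ⟨h1, h2⟩ | ⟨h1, h2⟩ <;> simp [h1, h2]
  have hq := key A B hbip lB hlegB hmemB hdomB
  have hp := key B A (bip_symm hbip) lA hlegA hmemA hdomA
  exact ⟨lA.length, by omega⟩
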